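/- With V, B, Q, Z, z₀ and 𝒞⁺_ρ as in the context (Q negative semi-definite on the kernel of Z): if w, w₁, w₂ ∈ 𝒞⁺_ρ satisfy w = w₁ + w₂, then 0 ≤ Q(w₁) + Q(w₂) ≤ Q(w); moreover, if Q(w₁) = Q(w), then Q(w) = Q(w₁) = Q(w₂) = B(w₁, w₂) = 0. -/
import Mathlib


namespace BridgelandNotes

variable {V : Type*} [AddCommGroup V] [Module ℝ V]

/-- The cone `𝒞⁺_ρ = {w ∈ V : Z(w) ∈ ρ and Q(w) ≥ 0}`, where `ρ = {t·z₀ : t > 0}`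
is the open ray through `z₀` and `Q(w) = B(w, w)`. -/
def posCone (B : V →ₗ[ℝ] V →ₗ[ℝ] ℝ) (Z : V →ₗ[ℝ] ℂ) (z₀ : ℂ) : Set V :=
  {w | (∃ t : ℝ, 0 < t ∧ Z w = t • z₀) ∧ 0 ≤ B w w}

/-- If the quadratic form `Q(w) = B(w,w)` is negative semi-definite on the kernel of
`Z`, and `w, w₁, w₂ ∈ 𝒞⁺_ρ` satisfy `w = w₁ + w₂`, then
`0 ≤ Q(w₁) + Q(w₂) ≤ Q(w)`; moreover `Q(w₁) = Q(w)` implies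
`Q(w) = Q(w₁) = Q(w₂) = B(w₁, w₂) = 0`. -/
theorem posCone_additivity (B : V →ₗ[ℝ] V →ₗ[ℝ] ℝ)
    (hsymm : ∀ x y : V, B x y = B y x)
    (Z : V →ₗ[ℝ] ℂ) (hker : ∀ v : V, Z v = 0 → B v v ≤ 0)
    (z₀ : ℂ) (hz₀ : z₀ ≠ 0)
    (w w₁ w₂ : V) (hw : w ∈ posCone B Z z₀)
    (h₁ : w₁ ∈ posCone B Z z₀) (h₂ : w₂ ∈ posCone B Z z₀)
    (hsum : w = w₁ + w₂) :
    (0 ≤ B w₁ w₁ + B w₂ w₂ ∧ B w₁ w₁ + B w₂ w₂ ≤ B w w) ∧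
    (B w₁ w₁ = B w w →
      B w w = 0 ∧ B w₁ w₁ = 0 ∧ B w₂ w₂ = 0 ∧ B w₁ w₂ = 0) := by
  obtain ⟨⟨t, ht, hZw⟩, hQw⟩ := hw
  obtain ⟨⟨t₁, ht₁, hZ1⟩, hQ1⟩ := h₁
  obtain ⟨⟨t₂, ht₂, hZ2⟩, hQ2⟩ := h₂
  have hv : Z (t₂ • w₁ - t₁ • w₂) = 0 := by
    simp only [map_sub, map_smul, hZ1, hZ2, smul_smul]
    rw [mul_comm]
    exact sub_self _
  have hk := hker _ hv
  have hexp : B (t₂ • w₁ - t₁ • w₂) (t₂ • w₁ - t₁ • w₂)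
      = t₂^2 * B w₁ w₁ - 2*t₁*t₂*(B w₁ w₂) + t₁^2 * B w₂ w₂ := by
    simp only [map_sub, map_smul, LinearMap.sub_apply, LinearMap.smul_apply,
      smul_eq_mul, hsymm w₂ w₁]
    ring
  rw [hexp] at hk
  have hB12 : 0 ≤ B w₁ w₂ := by
    nlinarith [mul_pos ht₁ ht₂, sq_nonneg t₁, sq_nonneg t₂]
  have hQwexp : B w w = B w₁ w₁ + 2 * B w₁ w₂ + B w₂ w₂ := by
    subst hsum
    simp only [map_add, LinearMap.add_apply, hsymm w₂ w₁]
    ring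
  refine ⟨⟨by linarith, by linarith⟩, fun heq => ?_⟩
  have hQ2' : B w₂ w₂ = 0 := by linarith
  have hB12' : B w₁ w₂ = 0 := by linarith
  have hQ1' : B w₁ w₁ ≤ 0 := by
    by_contra hpos
    push_neg at hpos
    have h2 : 0 < t₂ ^ 2 * B w₁ w₁ := mul_pos (pow_pos ht₂ 2) hpos
    rw [hB12', hQ2'] at hk
    simp only [mul_zero, sub_zero, add_zero] at hk
    linarith
  have hQ1'' : B w₁ w₁ = 0 := le_antisymm hQ1' hQ1
  exact ⟨by linarith, hQ1'', hQ2', hB12'⟩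

end BridgelandNotes
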